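/- In the global construction for a formula with m clauses over n variables, fix j ∈ {1,…,m} and r ∈ {1,2,3}, and let i = v(j,r). Among the 3m + 2n levee functions L_{j',r'}(x₁,x₂) = f_{s_{r'}^{(j')}}(x₁, x₂ − j'Δ) for j' ∈ {1,…,m}, r' ∈ {1,2,3}, and M_{i',σ}(x₁,x₂) = f_σ(x₁, x₂ + i'Δ) for i' ∈ {1,…,n}, σ ∈ {−1,1}, exactly two are nonzero at the point p_{j,r}, namely L_{j,r} and M_{i,1}; moreover both of these take the value 1 at p_{j,r}. -/
import Mathlib


/-- The levee with slope `s`, as a piecewise definition. -/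
noncomputable def levee (s x₁ x₂ : ℝ) : ℝ :=
  if 2 ≤ |x₂ - s * x₁| then 0
  else if |x₂ - s * x₁| ≤ 1 then 1
  else if x₂ - s * x₁ < -1 then 2 + x₂ - s * x₁
  else 2 - x₂ + s * x₁

/-- The slope `s_r^{(j)} = (2j − 3 + r)·δ − 1` with `δ = 1/(2m)` of the global construction. -/
noncomputable def slopeG (m j r : ℕ) : ℝ :=
  (2 * (j : ℝ) - 3 + (r : ℝ)) * (1 / (2 * (m : ℝ))) - 1

/-- The offset distance `Δ = 16m + 6` of the global construction. -/
noncomputable def DeltaG (m : ℕ) : ℝ := 16 * (m : ℝ) + 6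

/-- The point `p_{j,r}` of the global construction, where `i = v(j,r)`. -/
noncomputable def pPoint (m i j r : ℕ) : ℝ × ℝ :=
  (DeltaG m * ((i : ℝ) + (j : ℝ)) / (1 - slopeG m j r),
   DeltaG m * ((i : ℝ) + (j : ℝ)) / (1 - slopeG m j r) - DeltaG m * (i : ℝ))

lemma levee_eq_one_of (s x₁ x₂ : ℝ) (h : x₂ - s * x₁ = 0) : levee s x₁ x₂ = 1 := by
  simp [levee, h]

lemma levee_eq_zero_of (s x₁ x₂ : ℝ) (h : 2 ≤ x₂ - s * x₁ ∨ x₂ - s * x₁ ≤ -2) :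
    levee s x₁ x₂ = 0 := by
  have h2 : 2 ≤ |x₂ - s * x₁| := by
    rcases h with h | h
    · exact h.trans (le_abs_self _)
    · calc (2:ℝ) = -(-2) := by norm_num
        _ ≤ -(x₂ - s * x₁) := by linarith
        _ ≤ |x₂ - s * x₁| := neg_le_abs _
  simp [levee, h2]

set_option maxHeartbeats 1000000 in
/-- Among the `3m + 2n` levees of the global construction, exactly the two levees
`L_{j,r}` and `M_{v(j,r),1}` are nonzero at `p_{j,r}`, and both attain the value `1` there. -/
theorem exactly_two_levees_nonzero_at_p (m n : ℕ) (hm : 1 ≤ m) (hn : 1 ≤ n)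
    (v : ℕ → ℕ → ℕ)
    (hv : ∀ j, 1 ≤ j → j ≤ m → ∀ r, 1 ≤ r → r ≤ 3 → 1 ≤ v j r ∧ v j r ≤ n)
    (hvdist : ∀ j, 1 ≤ j → j ≤ m → ∀ r r', 1 ≤ r → r ≤ 3 → 1 ≤ r' → r' ≤ 3 → r ≠ r' →
      v j r ≠ v j r')
    (j r : ℕ) (hj₁ : 1 ≤ j) (hj₂ : j ≤ m) (hr₁ : 1 ≤ r) (hr₂ : r ≤ 3) :
    levee (slopeG m j r) (pPoint m (v j r) j r).1
        ((pPoint m (v j r) j r).2 - (j : ℝ) * DeltaG m) = 1 ∧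
    levee 1 (pPoint m (v j r) j r).1
        ((pPoint m (v j r) j r).2 + (v j r : ℝ) * DeltaG m) = 1 ∧
    (∀ j' r', 1 ≤ j' → j' ≤ m → 1 ≤ r' → r' ≤ 3 → (j', r') ≠ (j, r) →
      levee (slopeG m j' r') (pPoint m (v j r) j r).1
        ((pPoint m (v j r) j r).2 - (j' : ℝ) * DeltaG m) = 0) ∧
    (∀ (i' : ℕ) (σ : ℝ), 1 ≤ i' → i' ≤ n → (σ = -1 ∨ σ = 1) →
      (i', σ) ≠ (v j r, (1 : ℝ)) →
      levee σ (pPoint m (v j r) j r).1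
        ((pPoint m (v j r) j r).2 + (i' : ℝ) * DeltaG m) = 0) := by
  obtain ⟨hvi1, hvi2⟩ := hv j hj₁ hj₂ r hr₁ hr₂
  set i := v j r with hidef
  have hmR : (1:ℝ) ≤ m := by exact_mod_cast hm
  have hjR : (1:ℝ) ≤ j := by exact_mod_cast hj₁
  have hjmR : (j:ℝ) ≤ m := by exact_mod_cast hj₂
  have hrR : (1:ℝ) ≤ r := by exact_mod_cast hr₁
  have hr3R : (r:ℝ) ≤ 3 := by exact_mod_cast hr₂
  have hiR : (1:ℝ) ≤ i := by exact_mod_cast hvi1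
  set D : ℝ := DeltaG m with hDdef
  have hDval : D = 16*(m:ℝ)+6 := rfl
  have hDpos : (0:ℝ) < D := by rw [hDval]; linarith
  have hD22 : (22:ℝ) ≤ D := by rw [hDval]; linarith
  have hmpos : (0:ℝ) < 2*(m:ℝ) := by linarith
  set δ : ℝ := 1/(2*(m:ℝ)) with hδdef
  have hδpos : 0 < δ := by rw [hδdef]; positivity
  have hDδ : 8 ≤ D * δ := by
    rw [hDval, hδdef, mul_one_div, le_div_iff₀ hmpos]; linarith
  -- bounds on the slope for general admissible (j', r')
  have slope_bdd : ∀ j' r' : ℕ, (1:ℝ) ≤ j' → (j':ℝ) ≤ m → (1:ℝ) ≤ r' → (r':ℝ) ≤ 3 →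
      1 ≤ 1 - slopeG m j' r' ∧ 1 - slopeG m j' r' ≤ 2 := by
    intro j' r' h1 h2 h3 h4
    rw [slopeG]
    constructor
    · have : (2*(j':ℝ)-3+r') * (1/(2*(m:ℝ))) ≤ 1 := by
        rw [mul_one_div, div_le_one hmpos]; linarith
      linarith
    · have : 0 ≤ (2*(j':ℝ)-3+r') * (1/(2*(m:ℝ))) :=
        mul_nonneg (by linarith) (by positivity)
      linarith
  obtain ⟨hs1, hs2⟩ := slope_bdd j r hjR hjmR hrR hr3R
  set s : ℝ := slopeG m j r with hsdef
  have hsval : s = (2*(j:ℝ)-3+r) * δ - 1 := rfl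
  have h1s : (1 - s) ≠ 0 := by intro h; rw [h] at hs1; norm_num at hs1
  set X : ℝ := D * ((i:ℝ)+j) / (1 - s) with hXdef
  have hP1 : (pPoint m i j r).1 = X := rfl
  have hP2 : (pPoint m i j r).2 = X - D * i := rfl
  have hX : X * (1 - s) = D * ((i:ℝ)+j) := div_mul_cancel₀ _ h1s
  have hX0 : 0 ≤ X := by
    apply div_nonneg (by nlinarith) (by linarith)
  have hXD : D ≤ X := by nlinarith [mul_nonneg hX0 (by linarith : (0:ℝ) ≤ 1 + s)]
  have h2X : D * ((i:ℝ)+j) ≤ 2*X := by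
    nlinarith [mul_nonneg hX0 (by linarith : (0:ℝ) ≤ 1 + s)]
  refine ⟨?_, ?_, ?_, ?_⟩
  · rw [hP1, hP2]
    exact levee_eq_one_of _ _ _ (by linear_combination hX)
  · rw [hP1, hP2]
    exact levee_eq_one_of _ _ _ (by ring)
  · intro j' r' hj'1 hj'm hr'1 hr'3 hne
    rw [hP1, hP2]
    apply levee_eq_zero_of
    have hj'R : (1:ℝ) ≤ j' := by exact_mod_cast hj'1
    have hj'mR : (j':ℝ) ≤ m := by exact_mod_cast hj'm
    have hr'R : (1:ℝ) ≤ r' := by exact_mod_cast hr'1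
    have hr'3R : (r':ℝ) ≤ 3 := by exact_mod_cast hr'3
    have hs'val : slopeG m j' r' = (2*(j':ℝ)-3+r') * δ - 1 := rfl
    set t : ℝ := X - D * i - (j':ℝ) * D - slopeG m j' r' * X with htdef
    have hts : t = D*((j:ℝ) - j') + X * ((2*((j:ℝ)-(j':ℝ)) + ((r:ℝ)-(r':ℝ))) * δ) := by
      rw [htdef, hs'val]
      have hX' : X * (1 - ((2*(j:ℝ)-3+r) * δ - 1)) = D * ((i:ℝ)+j) := by
        rw [← hsval]; exact hX
      linear_combination hX'
    show 2 ≤ t ∨ t ≤ -2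
    rcases Nat.lt_trichotomy j' j with hlt | heq | hgt
    · left
      have hc : (j':ℝ) + 1 ≤ j := by exact_mod_cast hlt
      have hk : 0 ≤ (2*((j:ℝ)-(j':ℝ)) + ((r:ℝ)-(r':ℝ))) := by linarith
      have h1 := mul_nonneg hX0 (mul_nonneg hk hδpos.le)
      have h2 : D * 1 ≤ D * ((j:ℝ) - j') :=
        mul_le_mul_of_nonneg_left (by linarith) hDpos.le
      have h3 : D * 1 = D := mul_one D
      linarith [hts]
    · subst heq
      have hrne : r' ≠ r := fun h => hne (by rw [h])
      have hXδ : 8 ≤ X * δ := by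
        have := mul_le_mul_of_nonneg_right hXD hδpos.le
        linarith
      have ht2 : t = (X*δ) * ((r:ℝ) - r') := by linear_combination hts
      rcases Nat.lt_or_ge r' r with hlt | hge
      · left
        have hc : (r':ℝ) + 1 ≤ r := by exact_mod_cast hlt
        have h1 : 8 * ((r:ℝ) - r') ≤ (X*δ) * ((r:ℝ) - r') :=
          mul_le_mul_of_nonneg_right hXδ (by linarith)
        linarith [ht2]
      · right
        have hlt : r < r' := lt_of_le_of_ne hge (fun h => hrne h.symm)
        have hc : (r:ℝ) + 1 ≤ r' := by exact_mod_cast hlt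
        have h1 : 8 * ((r':ℝ) - r) ≤ (X*δ) * ((r':ℝ) - r) :=
          mul_le_mul_of_nonneg_right hXδ (by linarith)
        have h2 : (X*δ) * ((r':ℝ) - r) = -t := by linear_combination ht2
        linarith
    · right
      have hc : (j:ℝ) + 1 ≤ j' := by exact_mod_cast hgt
      have hk : 0 ≤ -(2*((j:ℝ)-(j':ℝ)) + ((r:ℝ)-(r':ℝ))) := by linarith
      have h1 := mul_nonneg hX0 (mul_nonneg hk hδpos.le)
      have h1' : X * (-(2*((j:ℝ)-(j':ℝ)) + ((r:ℝ)-(r':ℝ))) * δ)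
          = -(X * ((2*((j:ℝ)-(j':ℝ)) + ((r:ℝ)-(r':ℝ))) * δ)) := by ring
      have h2 : D * 1 ≤ D * ((j':ℝ) - j) :=
        mul_le_mul_of_nonneg_left (by linarith) hDpos.le
      have h3 : D * ((j':ℝ) - j) = -(D * ((j:ℝ) - j')) := by ring
      have h4 : D * 1 = D := mul_one D
      linarith [hts]
  · intro i' σ hi'1 hi'n hσ hne
    rw [hP1, hP2]
    apply levee_eq_zero_of
    have hi'R : (1:ℝ) ≤ i' := by exact_mod_cast hi'1
    have hexp : D * ((i:ℝ)+j) = D*(i:ℝ) + D*(j:ℝ) := by ring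
    rcases hσ with hσ | hσ <;> subst hσ
    · left
      have hDj : D * 1 ≤ D * (j:ℝ) := mul_le_mul_of_nonneg_left hjR hDpos.le
      have hDi' : D * 1 ≤ D * (i':ℝ) := mul_le_mul_of_nonneg_left hi'R hDpos.le
      have h1 : (i':ℝ) * D = D * (i':ℝ) := by ring
      have h2 : D * 1 = D := mul_one D
      linarith [h2X]
    · have hine : i' ≠ i := fun h => hne (by rw [h])
      rcases Nat.lt_or_ge i' i with hlt | hge
      · right
        have hc : (i':ℝ) + 1 ≤ i := by exact_mod_cast hlt
        have h1 : D * ((i':ℝ) + 1) ≤ D * (i:ℝ) := mul_le_mul_of_nonneg_left hc hDpos.le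
        have h2 : D * ((i':ℝ) + 1) = (i':ℝ)*D + D := by ring
        linarith
      · left
        have hlt : i < i' := lt_of_le_of_ne hge (fun h => hine h.symm)
        have hc : (i:ℝ) + 1 ≤ i' := by exact_mod_cast hlt
        have h1 : D * ((i:ℝ) + 1) ≤ D * (i':ℝ) := mul_le_mul_of_nonneg_left hc hDpos.le
        have h2 : D * ((i:ℝ) + 1) = D*(i:ℝ) + D := by ring
        have h3 : D * (i':ℝ) = (i':ℝ) * D := by ring
        linarith
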